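/- For commuting even λ, odd anticommuting χ^1,...,χ^N (commuting with λ), writing (Z-W)Λ = (z-w)λ + Σ_i(θ^i-ζ^i)χ^i and (Λ+∂_W)^{n|I} = (λ+∂_w)^n ∏_{i∈I}(χ^i + ∂_{ζ^i}), one has exp((Z-W)Λ) ∂_W^{n|I} δ(Z,W) = (Λ + ∂_W)^{n|I} δ(Z,W). -/

import Mathlib

noncomputable section

/-- The Grassmann algebra on `k` groups of `N` odd generators (e.g. `θ`'s, `ζ`'s, `χ`'s),
modelled as an exterior algebra. -/
abbrev Gr (k N : ℕ) : Type := ExteriorAlgebra ℂ (Fin k × Fin N → ℂ)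

/-- The `i`-th odd generator of the `g`-th group. -/
def gv {k N : ℕ} (g : Fin k) (i : Fin N) : Gr k N :=
  ExteriorAlgebra.ι ℂ (Pi.single (g, i) (1:ℂ))

/-- The odd (left) derivative with respect to the `i`-th generator of group `g`,
realized as contraction in the exterior algebra. -/
def dgv {k N : ℕ} (g : Fin k) (i : Fin N) : Module.End ℂ (Gr k N) :=
  CliffordAlgebra.contractLeft (LinearMap.proj (g, i))

/-- Iterated odd derivative extracting the coefficient of the full top monomial of
group `g` (applying `∂_1` first, then `∂_2`, etc.). -/
def resG {k N : ℕ} (g : Fin k) : Module.End ℂ (Gr k N) :=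
  (((List.finRange N).map (dgv g)).reverse).prod

/-- The reordering sign `σ(I,J)` determined by `θ^I θ^J = σ(I,J) θ^{I∪J}` for disjoint
ordered subsets, and `0` otherwise. -/
def sgn {N : ℕ} (I J : Finset (Fin N)) : ℤ :=
  if Disjoint I J then (-1)^(((I ×ˢ J).filter (fun p => p.2 < p.1)).card) else 0

/-- Ordered (increasing) product of the elements `f i`, `i ∈ J`. -/
def oprod {k N : ℕ} (J : Finset (Fin N)) (f : Fin N → Gr k N) : Gr k N :=
  ((J.sort (· ≤ ·)).map f).prod


namespace Stmt5

variable {N : ℕ}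

-- We work in the Grassmann algebra on three groups of generators:
-- group 0 = θ's, group 1 = ζ's, group 2 = χ's.

/-- Formal distributions in `Z, W`. -/
abbrev Dist2 (N : ℕ) : Type := ℤ → ℤ → Gr 3 N

/-- Formal distributions in `Z, W` with polynomial dependence on the even parameter `λ`
(the last index is the `λ`-degree); the odd parameters `χ^i` live in the Grassmann part. -/
abbrev Dist2L (N : ℕ) : Type := ℤ → ℤ → ℕ → Gr 3 N

/-- The formal super delta function. -/
def deltaDist (N : ℕ) : Dist2 N :=
  fun p q => if p + q = -1 then oprod Finset.univ (fun i => gv 0 i - gv 1 i) else 0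

/-- `∂_W^{n|I} = ∂_w^n ∂_{ζ^{i_1}} ⋯ ∂_{ζ^{i_k}}`. -/
def dW (n : ℕ) (I : Finset (Fin N)) (d : Dist2 N) : Dist2 N :=
  fun p q => (∏ t ∈ Finset.range n, ((q : ℂ) + 1 + t)) •
    (((I.sort (· ≤ ·)).map (dgv 1)).prod : Module.End ℂ (Gr 3 N)) (d p (q + n))

/-- The Grassmann factor `e^{Σ_i (θ^i - ζ^i)χ^i} = Π_i (1 + (θ^i - ζ^i)χ^i)`. -/
def expQ (N : ℕ) : Gr 3 N :=
  ((List.finRange N).map (fun i => 1 + (gv 0 i - gv 1 i) * gv 2 i)).prod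

/-- Left multiplication of a distribution by
`exp((Z-W)Λ) = e^{(z-w)λ} e^{Σ(θ^i-ζ^i)χ^i}`, recording the `λ`-degree in the last index. -/
def expMul (d : Dist2 N) : Dist2L N :=
  fun p q k => ∑ r ∈ Finset.range (k + 1),
    ((k.factorial : ℂ)⁻¹ * (-1 : ℂ)^(k - r) * (k.choose r)) •
      (expQ N * d (p - r) (q - ((k : ℤ) - r)))

/-- The operator `λ + ∂_w`. -/
def opLamW (F : Dist2L N) : Dist2L N :=
  fun p q k => (if k = 0 then 0 else F p q (k - 1)) + ((q : ℂ) + 1) • F p (q + 1) k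

/-- The operator `χ^i + ∂_{ζ^i}`. -/
def opChiW (i : Fin N) (F : Dist2L N) : Dist2L N :=
  fun p q k => gv 2 i * F p q k + dgv 1 i (F p q k)

/-- A distribution in `Z, W` viewed as constant in `λ`. -/
def toL (d : Dist2 N) : Dist2L N := fun p q k => if k = 0 then d p q else 0

end Stmt5

section GrAux
variable {N : ℕ}
open ExteriorAlgebra

local notation "ιc" => ExteriorAlgebra.ι ℂ (M := Fin 3 × Fin N → ℂ)

lemma dgv_mul (g : Fin 3) (i : Fin N) (a : Fin 3 × Fin N → ℂ) (x : Gr 3 N) :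
    dgv g i (ιc a * x) = a (g, i) • x - ιc a * dgv g i x :=
  CliffordAlgebra.contractLeft_ι_mul _ _ _

lemma anticomm (x y : Fin 3 × Fin N → ℂ) : ιc x * ιc y = -(ιc y * ιc x) :=
  eq_neg_of_add_eq_zero_left (ExteriorAlgebra.ι_add_mul_swap x y)

lemma central2 (a b : Fin 3 × Fin N → ℂ) (x : Gr 3 N) :
    (ιc a * ιc b) * x = x * (ιc a * ιc b) := by
  induction x using ExteriorAlgebra.induction with
  | algebraMap r => rw [← Algebra.commutes]
  | ι m =>
      rw [mul_assoc, anticomm b m, mul_neg, ← mul_assoc, anticomm a m, neg_mul, neg_neg,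
        mul_assoc]
  | mul u v hu hv => rw [← mul_assoc, hu, mul_assoc, hv, ← mul_assoc]
  | add u v hu hv => rw [mul_add, add_mul, hu, hv]

/-- vectors for θ-ζ and χ -/
def uvec (i : Fin N) : Fin 3 × Fin N → ℂ :=
  Pi.single ((0:Fin 3), i) 1 - Pi.single ((1:Fin 3), i) 1
def cvec (i : Fin N) : Fin 3 × Fin N → ℂ := Pi.single ((2:Fin 3), i) 1

lemma gv_sub (i : Fin N) : gv (0:Fin 3) i - gv 1 i = ιc (uvec i) := by
  rw [uvec, map_sub]; rfl

lemma gv2_eq (i : Fin N) : gv (2:Fin 3) i = ιc (cvec i) := rfl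

lemma uvec_apply (i j : Fin N) : uvec j ((1:Fin 3), i) = -(if j = i then (1:ℂ) else 0) := by
  simp only [uvec, Pi.sub_apply, Pi.single_apply, Prod.ext_iff]
  norm_num
  rw [if_congr (Iff.intro (fun h => h.symm) (fun h => h.symm)) rfl rfl]

lemma cvec_apply (i j : Fin N) : cvec j ((1:Fin 3), i) = 0 := by
  simp only [cvec, Pi.single_apply, Prod.ext_iff]
  rw [if_neg]; rintro ⟨h, -⟩; exact absurd h (by decide)

def Efun (i : Fin N) : Gr 3 N := 1 + (gv 0 i - gv 1 i) * gv 2 i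

lemma Efun_eq (i : Fin N) : Efun i = 1 + ιc (uvec i) * ιc (cvec i) := by
  rw [Efun, gv_sub, gv2_eq]

-- K1: derivative of E_j * x
lemma dgv_Efun (i j : Fin N) (x : Gr 3 N) :
    dgv 1 i (Efun j * x) = Efun j * dgv 1 i x - (if j = i then gv 2 i * x else 0) := by
  rw [Efun_eq, add_mul, one_mul, mul_assoc, map_add, dgv_mul, dgv_mul, uvec_apply, cvec_apply]
  by_cases h : j = i
  · simp only [h, if_pos rfl, ite_true, gv2_eq, neg_smul, one_smul, zero_smul, mul_sub,
      mul_zero, add_mul, one_mul, mul_assoc]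
    module
  · simp only [if_neg h, ite_false, gv2_eq, neg_zero, zero_smul, mul_sub, mul_zero,
      add_mul, one_mul, mul_assoc]
    abel

-- commutation of Efun with anything
lemma Efun_comm (j : Fin N) (z : Gr 3 N) : Efun j * z = z * Efun j := by
  rw [Efun_eq, add_mul, mul_add, one_mul, mul_one, central2]

lemma gv2_mul_Efun_self (i : Fin N) : gv (2:Fin 3) i * Efun i = gv 2 i := by
  rw [Efun_eq, gv2_eq, mul_add, mul_one, ← mul_assoc, anticomm (cvec i) (uvec i), neg_mul,
    mul_assoc, ι_sq_zero, mul_zero, neg_zero, add_zero]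

lemma ι_mul_prod_mem (v : Fin 3 × Fin N → ℂ) :
    ∀ (l : List (Fin 3 × Fin N → ℂ)), v ∈ l → ιc v * (l.map (ExteriorAlgebra.ι ℂ)).prod = 0 := by
  intro l
  induction l with
  | nil => intro h; exact absurd h List.not_mem_nil
  | cons w t ih =>
      intro hv
      rw [List.map_cons, List.prod_cons, ← mul_assoc]
      rcases List.mem_cons.mp hv with h | h
      · rw [h, ι_sq_zero, zero_mul]
      · rw [anticomm v w, neg_mul, mul_assoc, ih h, mul_zero, neg_zero]

/-- the Grassmann body of the delta function -/
def dcore (N : ℕ) : Gr 3 N := oprod Finset.univ (fun i => gv 0 i - gv 1 i)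

lemma dcore_eq : dcore N = (((Finset.univ.sort (· ≤ ·)).map uvec).map (ExteriorAlgebra.ι ℂ)).prod := by
  rw [dcore, oprod, List.map_map]
  congr 1
  exact List.map_congr_left (fun i _ => gv_sub i)

lemma uvec_mul_dcore (j : Fin N) : ιc (uvec j) * dcore N = 0 := by
  rw [dcore_eq]
  exact ι_mul_prod_mem _ _ (List.mem_map_of_mem (f := uvec) ((Finset.mem_sort _).mpr (Finset.mem_univ j)))

lemma Efun_mul_dcore (j : Fin N) : Efun j * dcore N = dcore N := by
  rw [Efun_eq, add_mul, one_mul, anticomm (uvec j) (cvec j), neg_mul, mul_assoc,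
    uvec_mul_dcore, mul_zero, neg_zero, add_zero]

lemma Eprod_mul_dcore : ∀ (l : List (Fin N)), ((l.map Efun).prod) * dcore N = dcore N := by
  intro l
  induction l with
  | nil => rw [List.map_nil, List.prod_nil, one_mul]
  | cons j t ih => rw [List.map_cons, List.prod_cons, mul_assoc, ih, Efun_mul_dcore]

/-- key super-Leibniz computation -/
lemma key_list (i : Fin N) : ∀ (l : List (Fin N)), i ∈ l → l.Nodup → ∀ (x : Gr 3 N),
    gv 2 i * ((l.map Efun).prod * x) + dgv 1 i ((l.map Efun).prod * x)
      = (l.map Efun).prod * dgv 1 i x := by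
  -- first: if i ∉ l, the product is transparent to both gv 2 i and dgv 1 i
  have transp : ∀ (l : List (Fin N)), i ∉ l → ∀ (x : Gr 3 N),
      dgv 1 i ((l.map Efun).prod * x) = (l.map Efun).prod * dgv 1 i x := by
    intro l
    induction l with
    | nil => intro _ x; rw [List.map_nil, List.prod_nil, one_mul, one_mul]
    | cons j t ih =>
        intro hl x
        rw [List.map_cons, List.prod_cons, mul_assoc, dgv_Efun,
          if_neg (show ¬ j = i by rintro rfl; exact hl List.mem_cons_self), sub_zero,
          ih (fun h => hl (List.mem_cons_of_mem j h)), mul_assoc]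
  intro l
  induction l with
  | nil => intro h; exact absurd h List.not_mem_nil
  | cons j t ih =>
      intro hi hnd x
      rw [List.map_cons, List.prod_cons, mul_assoc, dgv_Efun]
      rcases List.mem_cons.mp hi with h | h
      · -- j = i, and i ∉ t
        subst h
        have hit : i ∉ t := (List.nodup_cons.mp hnd).1
        rw [if_pos rfl, ← mul_assoc, gv2_mul_Efun_self, transp t hit x, mul_assoc]
        abel
      · -- i ∈ t, j ≠ i
        have hji : j ≠ i := by rintro rfl; exact (List.nodup_cons.mp hnd).1 h
        rw [if_neg hji, sub_zero, ← mul_assoc, ← Efun_comm, mul_assoc, ← mul_add,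
          ih h (List.nodup_cons.mp hnd).2 x, mul_assoc]

end GrAux

namespace Stmt5

variable {N : ℕ}


/-- key super-Leibniz for `expQ` -/
lemma key (i : Fin N) (x : Gr 3 N) :
    gv 2 i * (expQ N * x) + dgv 1 i (expQ N * x) = expQ N * dgv 1 i x :=
  key_list i (List.finRange N) (List.mem_finRange i) (List.nodup_finRange N) x

lemma expQ_mul_dcore : expQ N * dcore N = dcore N := Eprod_mul_dcore _

/-- formal `∂_w` -/
def Dw (d : Dist2 N) : Dist2 N := fun p q => ((q:ℂ)+1) • d p (q+1)

lemma dW_succ (n : ℕ) (I : Finset (Fin N)) (d : Dist2 N) :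
    dW (n+1) I d = Dw (dW n I d) := by
  funext p q
  simp only [dW, Dw, smul_smul]
  have h2 : q + (((n+1:ℕ)):ℤ) = q + 1 + n := by push_cast; ring
  rw [h2, Finset.prod_range_succ']
  congr 1
  rw [mul_comm]
  congr 1
  · norm_num
  · exact Finset.prod_congr rfl fun t _ => by push_cast; ring

lemma expMul_dz (i : Fin N) (d : Dist2 N) :
    expMul (fun p q => dgv 1 i (d p q)) = opChiW i (expMul d) := by
  funext p q k
  simp only [expMul, opChiW, Finset.mul_sum, map_sum, ← Finset.sum_add_distrib]
  refine Finset.sum_congr rfl fun r _ => ?_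
  rw [mul_smul_comm, map_smul, ← smul_add, key]

lemma expMul_prodOp (d : Dist2 N) : ∀ (s : List (Fin N)),
    expMul (fun p q => ((s.map (dgv 1)).prod : Module.End ℂ (Gr 3 N)) (d p q))
      = s.foldr opChiW (expMul d) := by
  intro s
  induction s with
  | nil => simp only [List.map_nil, List.prod_nil, Module.End.one_apply, List.foldr_nil]
  | cons j t ih =>
      rw [List.foldr_cons, ← ih, ← expMul_dz]
      congr 1

lemma sum_alt (k : ℕ) :
    ∑ r ∈ Finset.range (k+1), (-1:ℂ)^(k-r) * (k.choose r) = if k = 0 then 1 else 0 := by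
  have h : ∑ r ∈ Finset.range (k+1), (-1:ℂ)^r * (k.choose r) = if k = 0 then 1 else 0 := by
    have h0 := Int.alternating_sum_range_choose (n := k)
    have h1 := congrArg (fun z : ℤ => (z : ℂ)) h0
    push_cast at h1
    convert h1 using 2
  rw [← h, ← Finset.sum_range_reflect]
  refine Finset.sum_congr rfl fun r hr => ?_
  have hr' : r ≤ k := by have := Finset.mem_range.mp hr; omega
  have h2 : k + 1 - 1 - r = k - r := by omega
  rw [h2, Nat.choose_symm hr', Nat.sub_sub_self hr']

lemma expMul_delta : expMul (deltaDist N) = toL (deltaDist N) := by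
  funext p q k
  simp only [expMul, toL, deltaDist]
  have step : ∀ r : ℕ, expQ N * (if (p - (r:ℤ)) + (q - ((k:ℤ) - r)) = -1
        then oprod Finset.univ (fun i => gv 0 i - gv 1 i) else 0)
      = if p + q - k = -1 then dcore N else 0 := by
    intro r
    have harg : (p - (r:ℤ)) + (q - ((k:ℤ) - r)) = p + q - k := by ring
    rw [harg]
    by_cases h : p + q - (k:ℤ) = -1
    · rw [if_pos h, if_pos h]; exact expQ_mul_dcore
    · rw [if_neg h, if_neg h, mul_zero]
  simp only [step]
  rw [← Finset.sum_smul]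
  have hsum : ∑ r ∈ Finset.range (k+1),
      ((k.factorial : ℂ)⁻¹ * (-1 : ℂ)^(k - r) * (k.choose r)) = if k = 0 then 1 else 0 := by
    simp only [mul_assoc]
    rw [← Finset.mul_sum, sum_alt]
    by_cases hk : k = 0
    · subst hk; norm_num
    · rw [if_neg hk]; exact mul_zero _
  rw [hsum]
  by_cases hk : k = 0
  · subst hk
    rw [if_pos rfl, one_smul, if_pos rfl]
    norm_num [dcore]
  · rw [if_neg hk, zero_smul, if_neg hk]

lemma choose_aux (m r : ℕ) (h : r ≤ m) :
    ((r:ℂ) - ((m:ℂ)+1)) * ((((m+1).factorial : ℕ) : ℂ)⁻¹ * (-1:ℂ)^(m+1-r) * (((m+1).choose r : ℕ) : ℂ))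
      = ((m.factorial : ℕ) : ℂ)⁻¹ * (-1:ℂ)^(m-r) * ((m.choose r : ℕ) : ℂ) := by
  have hnat : (m + 1 - r) * (m+1).choose r = (m+1) * m.choose r := by
    rw [mul_comm, ← Nat.choose_succ_right_eq, Nat.add_one_mul_choose_eq]
  have h1 : ((m:ℂ) + 1 - r) * (((m+1).choose r : ℕ) : ℂ) = ((m:ℂ)+1) * ((m.choose r : ℕ) : ℂ) := by
    have h2 := congrArg (fun n : ℕ => (n:ℂ)) hnat
    push_cast [Nat.cast_sub (show r ≤ m + 1 by omega)] at h2
    convert h2 using 2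
  have hexp : m + 1 - r = (m - r) + 1 := by omega
  have hf : (((m+1).factorial : ℕ) : ℂ) = ((m:ℂ)+1) * ((m.factorial : ℕ) : ℂ) := by
    rw [Nat.factorial_succ]; push_cast; ring
  have hm0 : ((m:ℂ)+1) ≠ 0 := Nat.cast_add_one_ne_zero m
  have hf0 : ((m.factorial : ℕ) : ℂ) ≠ 0 := Nat.cast_ne_zero.mpr m.factorial_ne_zero
  rw [hexp, pow_succ, hf, mul_inv]
  have hinv : ((m:ℂ)+1) * ((m:ℂ)+1)⁻¹ = 1 := mul_inv_cancel₀ hm0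
  linear_combination (((m:ℂ)+1)⁻¹ * ((m.factorial : ℕ) : ℂ)⁻¹ * (-1:ℂ)^(m-r)) * h1
    + (((m.factorial : ℕ) : ℂ)⁻¹ * (-1:ℂ)^(m-r) * ((m.choose r : ℕ) : ℂ)) * hinv

lemma expMul_Dw (d : Dist2 N) : expMul (Dw d) = opLamW (expMul d) := by
  funext p q k
  cases k with
  | zero =>
      simp only [expMul, Dw, opLamW, Finset.sum_range_one]
      norm_num [mul_smul_comm]
  | succ m =>
      simp only [expMul, Dw, opLamW, if_neg (Nat.succ_ne_zero m), Nat.succ_sub_one]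
      have harg1 : ∀ r : ℕ, q - (((m+1:ℕ):ℤ) - r) + 1 = q - ((m:ℤ) - r) := by
        intro r; push_cast; ring
      have harg2 : ∀ r : ℕ, q + 1 - (((m+1:ℕ):ℤ) - r) = q - ((m:ℤ) - r) := by
        intro r; push_cast; ring
      simp only [harg1, harg2]
      have hL : ∀ x : ℕ,
          ((((m+1).factorial : ℕ) : ℂ)⁻¹ * (-1:ℂ)^(m+1-x) * (((m+1).choose x : ℕ) : ℂ)) •
            (expQ N * (((q - (((m+1:ℕ):ℤ) - x) : ℤ) : ℂ) + 1) • d (p - x) (q - ((m:ℤ) - x)))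
          = (((q:ℂ) + 1) * ((((m+1).factorial : ℕ) : ℂ)⁻¹ * (-1:ℂ)^(m+1-x)
                * (((m+1).choose x : ℕ) : ℂ))) •
              (expQ N * d (p - x) (q - ((m:ℤ) - x)))
            + ((((x:ℕ):ℂ) - ((m:ℂ)+1)) * ((((m+1).factorial : ℕ) : ℂ)⁻¹ * (-1:ℂ)^(m+1-x)
                * (((m+1).choose x : ℕ) : ℂ))) •
              (expQ N * d (p - x) (q - ((m:ℤ) - x))) := by
        intro x
        rw [mul_smul_comm, smul_smul, ← add_smul]
        congr 1
        push_cast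
        ring
      simp only [hL, Finset.sum_add_distrib, Finset.smul_sum, smul_smul]
      rw [add_comm]
      congr 1
      rw [Finset.sum_range_succ]
      have hlast : (((m+1:ℕ):ℂ) - ((m:ℂ)+1)) = 0 := by push_cast; ring
      rw [hlast, zero_mul, zero_smul, add_zero]
      refine Finset.sum_congr rfl fun x hx => ?_
      have hx' : x ≤ m := by have := Finset.mem_range.mp hx; omega
      rw [choose_aux m x hx']


/-- For even `λ` and odd anticommuting `χ^1, ..., χ^N` (commuting with `λ`), writing
`(Z-W)Λ = (z-w)λ + Σ_i (θ^i-ζ^i)χ^i` and `(Λ+∂_W)^{n|I} = (λ+∂_w)^n Π_{i∈I}(χ^i+∂_{ζ^i})`,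
one has `exp((Z-W)Λ) ∂_W^{n|I} δ(Z,W) = (Λ+∂_W)^{n|I} δ(Z,W)`. -/

theorem stmt5 (N : ℕ) (n : ℕ) (I : Finset (Fin N)) :
    expMul (dW n I (deltaDist N))
      = opLamW^[n] ((I.sort (· ≤ ·)).foldr opChiW (toL (deltaDist N))) := by
  induction n with
  | zero =>
      have h0 : dW 0 I (deltaDist N)
          = fun p q => (((I.sort (· ≤ ·)).map (dgv 1)).prod : Module.End ℂ (Gr 3 N))
              (deltaDist N p q) := by
        funext p q
        simp [dW]
      rw [Function.iterate_zero, id_eq, h0, expMul_prodOp, expMul_delta]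
  | succ n ih =>
      rw [dW_succ, expMul_Dw, ih, Function.iterate_succ_apply']

end Stmt5
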